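/- Fix μ ∈ ℝ, σ > 0, c ∈ ℝ, τ > 0 and q ∈ ℝ. For every t > 0, the map t ↦ F(t, τ, q; μ, σ, c) is differentiable at t with derivative equal to -((μ - c)/(σ²√τ)) · t^{-3/2} · φ(√(tτ)(q - c) + (μ - c)/(σ²√(tτ))). In particular, the hitting-time density f(t | q) := -dF/dt equals ((μ - c)/(σ²√τ)) · t^{-3/2} · φ(√(tτ)(q - c) + (μ - c)/(σ²√(tτ))). -/

import Mathlib

open Real MeasureTheory Filter Topology

/-- Standard normal density φ(x) = exp(-x²/2)/√(2π). -/
noncomputable def stdPdf (x : ℝ) : ℝ := Real.exp (-(x ^ 2) / 2) / Real.sqrt (2 * Real.pi)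

/-- Standard normal CDF Φ(x) = ∫_{-∞}^x φ(u) du. -/
noncomputable def stdCdf (x : ℝ) : ℝ := ∫ u in Set.Iio x, stdPdf u

/-- Survival probability F(t, τ, q; μ, σ, c): the probability that the agent's
reputation does not hit the cost c before time t, given true quality q. -/
noncomputable def survF (t τ q μ σ c : ℝ) : ℝ :=
  stdCdf (Real.sqrt (t * τ) * (q - c) + (μ - c) / (σ ^ 2 * Real.sqrt (t * τ)))
    - Real.exp (-(2 / σ ^ 2) * (μ - c) * (q - c)) *
      stdCdf (Real.sqrt (t * τ) * (q - c) - (μ - c) / (σ ^ 2 * Real.sqrt (t * τ)))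

lemma integrable_stdPdf : Integrable stdPdf := by
  have h : Integrable fun u : ℝ => Real.exp (-(1/2:ℝ) * u ^ 2) :=
    integrable_exp_neg_mul_sq (by norm_num)
  exact (h.div_const (Real.sqrt (2*Real.pi))).congr (Filter.Eventually.of_forall fun u => by
    unfold stdPdf; ring_nf)

lemma continuous_stdPdf : Continuous stdPdf := by
  unfold stdPdf; fun_prop

lemma hasDerivAt_stdCdf (x : ℝ) : HasDerivAt stdCdf (stdPdf x) x := by
  have key : ∀ y, stdCdf y = stdCdf 0 + ∫ u in (0:ℝ)..y, stdPdf u := by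
    intro y
    rw [← intervalIntegral.integral_Iic_sub_Iic integrable_stdPdf.integrableOn
      integrable_stdPdf.integrableOn]
    unfold stdCdf
    rw [← MeasureTheory.integral_Iic_eq_integral_Iio, ← MeasureTheory.integral_Iic_eq_integral_Iio]
    ring
  have hd : HasDerivAt (fun y => stdCdf 0 + ∫ u in (0:ℝ)..y, stdPdf u) (stdPdf x) x := by
    refine HasDerivAt.const_add _ ?_
    exact intervalIntegral.integral_hasDerivAt_right
      (integrable_stdPdf.intervalIntegrable)
      (continuous_stdPdf.aestronglyMeasurable.stronglyMeasurableAtFilter)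
      continuous_stdPdf.continuousAt
  have : stdCdf = fun y => stdCdf 0 + ∫ u in (0:ℝ)..y, stdPdf u := funext key
  rw [this]; exact hd

/-- for t > 0 the survival probability is differentiable in t with derivative
-((μ-c)/(σ²√τ)) · t^{-3/2} · φ(√(tτ)(q-c) + (μ-c)/(σ²√(tτ))); equivalently the hitting-time
density -dF/dt equals ((μ-c)/(σ²√τ)) · t^{-3/2} · φ(√(tτ)(q-c) + (μ-c)/(σ²√(tτ))). -/
theorem stmt_12 (μ σ c τ q : ℝ) (hσ : 0 < σ) (hτ : 0 < τ) (t : ℝ) (ht : 0 < t) :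
    HasDerivAt (fun s : ℝ => survF s τ q μ σ c)
      (-((μ - c) / (σ ^ 2 * Real.sqrt τ)) * t ^ (-(3 : ℝ) / 2) *
        stdPdf (Real.sqrt (t * τ) * (q - c) + (μ - c) / (σ ^ 2 * Real.sqrt (t * τ)))) t := by
  have htτ : 0 < t * τ := mul_pos ht hτ
  have hs0 : 0 < Real.sqrt (t * τ) := Real.sqrt_pos.2 htτ
  have hs0sq : Real.sqrt (t * τ) ^ 2 = t * τ := Real.sq_sqrt htτ.le
  have hσ2 : (σ : ℝ) ^ 2 ≠ 0 := pow_ne_zero 2 hσ.ne'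
  set g' : ℝ := τ / (2 * Real.sqrt (t * τ)) with hg'def
  have hs : HasDerivAt (fun u : ℝ => Real.sqrt (u * τ)) g' t := by
    have hmul : HasDerivAt (fun u : ℝ => u * τ) τ t := by
      simpa using (hasDerivAt_id t).mul_const τ
    have := (Real.hasDerivAt_sqrt htτ.ne').comp t hmul
    simpa [hg'def, Function.comp_def, mul_comm, div_eq_mul_inv] using this
  have hden : HasDerivAt (fun u : ℝ => σ ^ 2 * Real.sqrt (u * τ)) (σ ^ 2 * g') t :=
    hs.const_mul _
  have hdenne : σ ^ 2 * Real.sqrt (t * τ) ≠ 0 := mul_ne_zero hσ2 hs0.ne'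
  have hfrac : HasDerivAt (fun u : ℝ => (μ - c) / (σ ^ 2 * Real.sqrt (u * τ)))
      ((μ - c) * (-(σ ^ 2 * g') / (σ ^ 2 * Real.sqrt (t * τ)) ^ 2)) t := by
    simpa [div_eq_mul_inv] using (hden.inv hdenne).const_mul (μ - c)
  set f' : ℝ := (μ - c) * (-(σ ^ 2 * g') / (σ ^ 2 * Real.sqrt (t * τ)) ^ 2) with hf'def
  have ha : HasDerivAt (fun u : ℝ =>
      Real.sqrt (u * τ) * (q - c) + (μ - c) / (σ ^ 2 * Real.sqrt (u * τ)))
      (g' * (q - c) + f') t := (hs.mul_const (q - c)).add hfrac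
  have hb : HasDerivAt (fun u : ℝ =>
      Real.sqrt (u * τ) * (q - c) - (μ - c) / (σ ^ 2 * Real.sqrt (u * τ)))
      (g' * (q - c) - f') t := (hs.mul_const (q - c)).sub hfrac
  set at0 : ℝ := Real.sqrt (t * τ) * (q - c) + (μ - c) / (σ ^ 2 * Real.sqrt (t * τ)) with hat
  set bt0 : ℝ := Real.sqrt (t * τ) * (q - c) - (μ - c) / (σ ^ 2 * Real.sqrt (t * τ)) with hbt
  have hA := (hasDerivAt_stdCdf at0).comp t ha
  have hB := ((hasDerivAt_stdCdf bt0).comp t hb).const_mul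
    (Real.exp (-(2 / σ ^ 2) * (μ - c) * (q - c)))
  have hF := hA.sub hB
  have hexp : Real.exp (-(2 / σ ^ 2) * (μ - c) * (q - c)) * stdPdf bt0 = stdPdf at0 := by
    unfold stdPdf
    rw [mul_div_assoc', ← Real.exp_add]
    congr 1
    rw [hat, hbt]
    field_simp
    ring_nf
  have hrpow : t ^ (-(3:ℝ)/2) = (t * Real.sqrt t)⁻¹ := by
    rw [show (-(3:ℝ)/2) = -((1:ℝ) + 1/2) by norm_num, Real.rpow_neg ht.le,
      Real.rpow_add ht, Real.rpow_one, Real.sqrt_eq_rpow]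
  have hst : 0 < Real.sqrt t := Real.sqrt_pos.2 ht
  have hsτ : 0 < Real.sqrt τ := Real.sqrt_pos.2 hτ
  have hmulsqrt : Real.sqrt (t * τ) = Real.sqrt t * Real.sqrt τ := Real.sqrt_mul ht.le _
  have key : stdPdf at0 * (g' * (q - c) + f') -
      Real.exp (-(2 / σ ^ 2) * (μ - c) * (q - c)) * (stdPdf bt0 * (g' * (q - c) - f')) =
      -((μ - c) / (σ ^ 2 * Real.sqrt τ)) * t ^ (-(3 : ℝ) / 2) * stdPdf at0 := by
    have : Real.exp (-(2 / σ ^ 2) * (μ - c) * (q - c)) * (stdPdf bt0 * (g' * (q - c) - f')) =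
        stdPdf at0 * (g' * (q - c) - f') := by rw [← mul_assoc, hexp]
    rw [this]
    have h2 : stdPdf at0 * (g' * (q - c) + f') - stdPdf at0 * (g' * (q - c) - f') =
        stdPdf at0 * (2 * f') := by ring
    rw [h2, hrpow, hf'def, hg'def, hmulsqrt]
    have hstsq : Real.sqrt t ^ 2 = t := Real.sq_sqrt ht.le
    have hsτsq : Real.sqrt τ ^ 2 = τ := Real.sq_sqrt hτ.le
    set x := Real.sqrt t with hxdef
    set y := Real.sqrt τ with hydef
    rw [← hstsq, ← hsτsq]
    have hx : x ≠ 0 := hst.ne'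
    have hy : y ≠ 0 := hsτ.ne'
    field_simp
  exact (hF.congr_deriv key).congr_of_eventuallyEq (Filter.Eventually.of_forall fun s => by
    simp [survF, Function.comp, hat, hbt])
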